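/- Let β > α > 0 be real numbers, and let ψ : (0,∞) → ℝ be measurable with ∫₀^∞ |ψ(t)| dt < ∞ and ∫₀^∞ t^β |ψ(t)| dt < ∞, and suppose ∫₀^∞ t^j ψ(t) dt = 0 for every integer j with 0 ≤ j ≤ ⌊α⌋. Set γ = α − min(⌊α⌋ + 1, β), so that γ < 0. Then there exists a constant C > 0 such that |I_+^{1+α}ψ(s)| ≤ C s^α for all 0 < s ≤ 1 and |I_+^{1+α}ψ(s)| ≤ C s^γ for all s ≥ 1. -/

import Mathlib

lemma binom_taylor_bound (α : ℝ) (hα : 0 < α) (n : ℕ) :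
    ∃ c : ℕ → ℝ, ∃ C : ℝ, 0 ≤ C ∧ ∀ x ∈ Set.Icc (0:ℝ) 1,
      |(1 - x) ^ α - ∑ j ∈ Finset.range (n+1), c j * x ^ j| ≤ C * x ^ (n+1) := by
  set f : ℝ → ℝ := fun x => (1 - x) ^ α with hf
  have hcont : Continuous f := by
    have h1 : Continuous fun x : ℝ => x ^ α := by
      rw [continuous_iff_continuousAt]
      exact fun x => Real.continuousAt_rpow_const x α (Or.inr hα.le)
    exact h1.comp (continuous_const.sub continuous_id)
  have hcd : ContDiffOn ℝ (n+1) f (Set.Icc 0 (1/2)) := by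
    intro x hx
    have hne : (1:ℝ) - x ≠ 0 := by
      have := hx.2; simp only [Set.mem_Icc] at hx; nlinarith [hx.1, hx.2]
    exact ((Real.contDiffAt_rpow_const_of_ne (p := α) hne).comp x
      ((contDiff_const.sub contDiff_id).contDiffAt)).contDiffWithinAt
  obtain ⟨C₀, hC₀⟩ := exists_taylor_mean_remainder_bound (by norm_num : (0:ℝ) ≤ 1/2) hcd
  set c : ℕ → ℝ := fun j => ((Nat.factorial j : ℝ))⁻¹ * iteratedDerivWithin j f (Set.Icc 0 (1/2)) 0 with hc
  have hP : ∀ x : ℝ, taylorWithinEval f n (Set.Icc 0 (1/2)) 0 x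
      = ∑ j ∈ Finset.range (n+1), c j * x ^ j := by
    intro x
    rw [taylor_within_apply]
    refine Finset.sum_congr rfl fun j _ => ?_
    simp [hc, smul_eq_mul]; ring
  -- bound on [1/2, 1]
  set g : ℝ → ℝ := fun x => f x - ∑ j ∈ Finset.range (n+1), c j * x ^ j with hg
  have hgc : ContinuousOn g (Set.Icc (1/2 : ℝ) 1) := by
    apply Continuous.continuousOn
    exact hcont.sub (continuous_finset_sum _ fun j _ => continuous_const.mul (continuous_pow j))
  obtain ⟨M, hM⟩ := (isCompact_Icc : IsCompact (Set.Icc (1/2:ℝ) 1)).exists_bound_of_continuousOn hgc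
  refine ⟨c, max C₀ ((max M 0) * 2 ^ (n+1)), le_max_of_le_right (by positivity), ?_⟩
  intro x hx
  rcases le_or_gt x (1/2) with hx2 | hx2
  · have := hC₀ x ⟨hx.1, hx2⟩
    rw [hP, Real.norm_eq_abs, sub_zero] at this
    calc |g x| ≤ C₀ * x ^ (n+1) := this
      _ ≤ max C₀ ((max M 0) * 2 ^ (n+1)) * x ^ (n+1) := by
          apply mul_le_mul_of_nonneg_right (le_max_left _ _) (pow_nonneg hx.1 _)
  · have hMx := hM x ⟨hx2.le, hx.2⟩
    rw [Real.norm_eq_abs] at hMx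
    have h2x : (1:ℝ) ≤ 2 * x := by linarith
    calc |g x| ≤ max M 0 := hMx.trans (le_max_left _ _)
      _ = max M 0 * 1 := (mul_one _).symm
      _ ≤ max M 0 * (2*x) ^ (n+1) := by
          apply mul_le_mul_of_nonneg_left (one_le_pow₀ h2x) (le_max_right _ _)
      _ ≤ max C₀ ((max M 0) * 2 ^ (n+1)) * x ^ (n+1) := by
          rw [mul_pow]
          rw [← mul_assoc]
          exact mul_le_mul_of_nonneg_right (le_max_right _ _) (pow_nonneg hx.1 _)



open MeasureTheory

/-- The Riemann–Liouville fractional integral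
`I_+^a g(t) = (1/Γ(a)) ∫₀^t g(r) (t-r)^{a-1} dr`. -/
noncomputable def riemannLiouville (a : ℝ) (g : ℝ → ℝ) (t : ℝ) : ℝ :=
  (1 / Real.Gamma a) * ∫ r in Set.Ioo 0 t, g r * (t - r) ^ (a - 1)

/-- Pointwise estimates of `I_+^{1+α} ψ` (first part of Lemma 2.4 of Rubin 1998):
`|I_+^{1+α}ψ(s)| = O(s^α)` for `0 < s ≤ 1` and `O(s^γ)` for `s ≥ 1`,
where `γ = α - min(⌊α⌋+1, β)`. -/
theorem stmt_2 (α β : ℝ) (hα : 0 < α) (hαβ : α < β)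
    (ψ : ℝ → ℝ) (hmeas : Measurable ψ)
    (hint : IntegrableOn (fun t => |ψ t|) (Set.Ioi 0))
    (hint2 : IntegrableOn (fun t => t ^ β * |ψ t|) (Set.Ioi 0))
    (hmom : ∀ j : ℕ, j ≤ ⌊α⌋₊ → ∫ t in Set.Ioi 0, t ^ j * ψ t = 0) :
    ∃ C : ℝ, 0 < C ∧
      (∀ s : ℝ, 0 < s → s ≤ 1 → |riemannLiouville (1 + α) ψ s| ≤ C * s ^ α) ∧
      (∀ s : ℝ, 1 ≤ s →
        |riemannLiouville (1 + α) ψ s| ≤ C * s ^ (α - min ((⌊α⌋₊ : ℝ) + 1) β)) := by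
  set n := ⌊α⌋₊ with hn
  have hnα : (n : ℝ) ≤ α := Nat.floor_le hα.le
  have hαn : α < n + 1 := Nat.lt_floor_add_one α
  set m : ℝ := min ((n:ℝ) + 1) β with hm
  have hαm : α < m := lt_min hαn hαβ
  have hm0 : 0 < m := lt_trans hα hαm
  have hmβ : m ≤ β := min_le_right _ _
  have hmn1 : m ≤ (n:ℝ) + 1 := min_le_left _ _
  obtain ⟨c, Ct, hCt0, hTay⟩ := binom_taylor_bound α hα n
  have hΓ : 0 < Real.Gamma (1 + α) := Real.Gamma_pos_of_pos (by linarith)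
  set M₁ := ∫ t in Set.Ioi (0:ℝ), |ψ t| with hM₁
  set M₂ := ∫ t in Set.Ioi (0:ℝ), t ^ β * |ψ t| with hM₂
  have hM₁0 : 0 ≤ M₁ := setIntegral_nonneg measurableSet_Ioi fun t _ => abs_nonneg _
  have hM₂0 : 0 ≤ M₂ := setIntegral_nonneg measurableSet_Ioi fun t ht =>
    mul_nonneg (Real.rpow_nonneg (le_of_lt ht) _) (abs_nonneg _)
  have hψint : IntegrableOn ψ (Set.Ioi (0:ℝ)) :=
    (integrable_norm_iff hmeas.aestronglyMeasurable.restrict).mp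
      (by simp only [Real.norm_eq_abs]; exact hint)
  have hsum : IntegrableOn (fun t => |ψ t| + t ^ β * |ψ t|) (Set.Ioi (0:ℝ)) := hint.add hint2
  have hpow_le : ∀ p : ℝ, 0 ≤ p → p ≤ β → ∀ r : ℝ, 0 < r → r ^ p ≤ 1 + r ^ β := by
    intro p hp0 hpβ r hr
    rcases le_or_gt r 1 with h1 | h1
    · have h := Real.rpow_le_one hr.le h1 hp0
      have hb : 0 ≤ r ^ β := Real.rpow_nonneg hr.le _
      linarith
    · have h := Real.rpow_le_rpow_of_exponent_le h1.le hpβ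
      linarith
  have hmono_int : ∀ j : ℕ, j ≤ n → IntegrableOn (fun r => r ^ j * ψ r) (Set.Ioi (0:ℝ)) := by
    intro j hj
    have hjβ : (j:ℝ) ≤ β := le_trans (le_trans (Nat.cast_le.mpr hj) hnα) hαβ.le
    apply Integrable.mono' hsum ((measurable_id.pow_const j).mul hmeas).aestronglyMeasurable.restrict
    filter_upwards [ae_restrict_mem measurableSet_Ioi] with r hr
    have hr0 : (0:ℝ) < r := hr
    simp only [id_eq, Pi.mul_apply]
    rw [Real.norm_eq_abs, abs_mul, abs_pow, abs_of_pos hr0]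
    calc r ^ j * |ψ r| ≤ (1 + r ^ β) * |ψ r| := by
          apply mul_le_mul_of_nonneg_right _ (abs_nonneg _)
          rw [← Real.rpow_natCast r j]
          exact hpow_le _ (by positivity) hjβ r hr0
      _ = |ψ r| + r ^ β * |ψ r| := by ring
  have hRL : ∀ s : ℝ, riemannLiouville (1+α) ψ s
      = (1 / Real.Gamma (1+α)) * ∫ r in Set.Ioo 0 s, ψ r * (s - r) ^ α := by
    intro s; simp only [riemannLiouville, add_sub_cancel_left]
  -- small s bound
  have hsmall : ∀ s : ℝ, 0 < s → s ≤ 1 →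
      |riemannLiouville (1+α) ψ s| ≤ (1/Real.Gamma (1+α)) * M₁ * s ^ α := by
    intro s hs0 hs1
    rw [hRL, abs_mul, abs_of_pos (by positivity : (0:ℝ) < 1/Real.Gamma (1+α)), mul_assoc]
    apply mul_le_mul_of_nonneg_left _ (by positivity : (0:ℝ) ≤ 1/Real.Gamma (1+α))
    calc |∫ r in Set.Ioo 0 s, ψ r * (s - r) ^ α|
        ≤ ∫ r in Set.Ioo 0 s, ‖ψ r * (s - r) ^ α‖ := by
              rw [← Real.norm_eq_abs]; exact norm_integral_le_integral_norm _
      _ ≤ ∫ r in Set.Ioo 0 s, |ψ r| * s ^ α := by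
          apply integral_mono_of_nonneg
          · filter_upwards with r using norm_nonneg _
          · exact ((hint.mono_set Set.Ioo_subset_Ioi_self).mul_const _)
          · filter_upwards [ae_restrict_mem measurableSet_Ioo] with r hr
            rw [Real.norm_eq_abs, abs_mul]
            apply mul_le_mul_of_nonneg_left _ (abs_nonneg _)
            rw [abs_of_nonneg (Real.rpow_nonneg (by linarith [hr.2] : (0:ℝ) ≤ s - r) _)]
            exact Real.rpow_le_rpow (by linarith [hr.2]) (by linarith [hr.1]) hα.le
      _ = (∫ r in Set.Ioo 0 s, |ψ r|) * s ^ α := integral_mul_const _ _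
      _ ≤ M₁ * s ^ α := by
          apply mul_le_mul_of_nonneg_right _ (Real.rpow_nonneg hs0.le _)
          exact setIntegral_mono_set hint
            (by filter_upwards with r using abs_nonneg _)
            (HasSubset.Subset.eventuallyLE Set.Ioo_subset_Ioi_self)
  -- large s bound
  have hbig : ∀ s : ℝ, 1 ≤ s → |riemannLiouville (1+α) ψ s| ≤
      (1/Real.Gamma (1+α)) * ((∑ j ∈ Finset.range (n+1), |c j|) * M₂ + Ct * (M₁ + M₂))
        * s ^ (α - m) := by
    intro s hs1
    have hs0 : (0:ℝ) < s := lt_of_lt_of_le one_pos hs1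
    have hsub : Set.Ioo (0:ℝ) s ⊆ Set.Ioi 0 := Set.Ioo_subset_Ioi_self
    set E : ℝ → ℝ := fun r =>
      (s - r) ^ α - ∑ j ∈ Finset.range (n+1), c j * s ^ (α - (j:ℝ)) * r ^ j with hE
    have hE_eq : ∀ r ∈ Set.Ioo (0:ℝ) s, E r
        = s ^ α * ((1 - r/s) ^ α - ∑ j ∈ Finset.range (n+1), c j * (r/s) ^ j) := by
      intro r hr
      have hrs : 0 ≤ 1 - r/s := by
        have : r/s ≤ 1 := (div_le_one hs0).mpr hr.2.le
        linarith
      have h1 : (s - r) ^ α = s ^ α * (1 - r/s) ^ α := by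
        rw [← Real.mul_rpow hs0.le hrs]
        congr 1
        field_simp
      rw [hE]
      simp only
      rw [h1, mul_sub, Finset.mul_sum]
      congr 1
      refine Finset.sum_congr rfl fun j _ => ?_
      have hsj : s ^ ((j:ℝ)) ≠ 0 := ne_of_gt (Real.rpow_pos_of_pos hs0 _)
      rw [div_pow, Real.rpow_sub hs0, ← Real.rpow_natCast s j]
      field_simp
    have hψE_bd : ∀ r ∈ Set.Ioo (0:ℝ) s,
        |ψ r * E r| ≤ Ct * s ^ (α - m) * (|ψ r| + r ^ β * |ψ r|) := by
      intro r hr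
      have hr0 : 0 < r := hr.1
      have ht0 : 0 < r/s := by positivity
      have ht1 : r/s ≤ 1 := (div_le_one hs0).mpr hr.2.le
      have hE_bd : |E r| ≤ Ct * (s ^ α * (r/s) ^ (n+1)) := by
        rw [hE_eq r hr, abs_mul, abs_of_nonneg (Real.rpow_nonneg hs0.le _)]
        calc s ^ α * |(1 - r/s) ^ α - ∑ j ∈ Finset.range (n+1), c j * (r/s) ^ j|
            ≤ s ^ α * (Ct * (r/s) ^ (n+1)) :=
              mul_le_mul_of_nonneg_left (hTay _ ⟨ht0.le, ht1⟩) (Real.rpow_nonneg hs0.le _)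
          _ = Ct * (s ^ α * (r/s) ^ (n+1)) := by ring
      have h1 : ((r/s)) ^ (n+1) ≤ (r/s) ^ m := by
        rw [← Real.rpow_natCast (r/s) (n+1)]
        apply Real.rpow_le_rpow_of_exponent_ge ht0 ht1
        exact_mod_cast hmn1
      have h2 : s ^ α * (r/s) ^ m = s ^ (α - m) * r ^ m := by
        rw [Real.div_rpow hr0.le hs0.le, Real.rpow_sub hs0]
        ring
      have h3 : r ^ m ≤ 1 + r ^ β := hpow_le m hm0.le hmβ r hr0
      rw [abs_mul]
      calc |ψ r| * |E r| ≤ |ψ r| * (Ct * (s ^ α * (r/s) ^ (n+1))) :=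
            mul_le_mul_of_nonneg_left hE_bd (abs_nonneg _)
        _ ≤ |ψ r| * (Ct * (s ^ α * (r/s) ^ m)) := by
            apply mul_le_mul_of_nonneg_left _ (abs_nonneg _)
            apply mul_le_mul_of_nonneg_left _ hCt0
            exact mul_le_mul_of_nonneg_left h1 (Real.rpow_nonneg hs0.le _)
        _ = Ct * s ^ (α - m) * (r ^ m * |ψ r|) := by rw [h2]; ring
        _ ≤ Ct * s ^ (α - m) * ((1 + r ^ β) * |ψ r|) := by
            apply mul_le_mul_of_nonneg_left
              (mul_le_mul_of_nonneg_right h3 (abs_nonneg _))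
              (mul_nonneg hCt0 (Real.rpow_nonneg hs0.le _))
        _ = Ct * s ^ (α - m) * (|ψ r| + r ^ β * |ψ r|) := by ring
    have hEmeas : Measurable E := by
      apply Measurable.sub
      · have hco : Continuous fun r : ℝ => (s - r) ^ α := by
          have h1 : Continuous fun x : ℝ => x ^ α := by
            rw [continuous_iff_continuousAt]
            exact fun x => Real.continuousAt_rpow_const x α (Or.inr hα.le)
          exact h1.comp (continuous_const.sub continuous_id)
        exact hco.measurable
      · exact Finset.measurable_sum _ fun j _ => (measurable_id.pow_const j).const_mul _
    have hψE_int : IntegrableOn (fun r => ψ r * E r) (Set.Ioo 0 s) := by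
      apply Integrable.mono' ((hsum.mono_set hsub).const_mul (Ct * s ^ (α - m)))
        (hmeas.mul hEmeas).aestronglyMeasurable.restrict
      filter_upwards [ae_restrict_mem measurableSet_Ioo] with r hr
      rw [Real.norm_eq_abs]
      exact hψE_bd r hr
    have hj_int : ∀ j ∈ Finset.range (n+1),
        IntegrableOn (fun r => c j * s ^ (α - (j:ℝ)) * (r ^ j * ψ r)) (Set.Ioo 0 s) := by
      intro j hj
      exact ((hmono_int j (Nat.lt_succ_iff.mp (Finset.mem_range.mp hj))).mono_set hsub).const_mul _
    have hsplit : ∫ r in Set.Ioo 0 s, ψ r * (s - r) ^ α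
        = (∑ j ∈ Finset.range (n+1), c j * s ^ (α - (j:ℝ)) * ∫ r in Set.Ioo 0 s, r ^ j * ψ r)
          + ∫ r in Set.Ioo 0 s, ψ r * E r := by
      have hptwise : Set.EqOn (fun r => ψ r * (s - r) ^ α)
          (fun r => (∑ j ∈ Finset.range (n+1), c j * s ^ (α - (j:ℝ)) * (r ^ j * ψ r))
            + ψ r * E r) (Set.Ioo 0 s) := by
        intro r _
        simp only
        have hsm : ∑ j ∈ Finset.range (n+1), c j * s ^ (α - (j:ℝ)) * (r ^ j * ψ r)
            = (∑ j ∈ Finset.range (n+1), c j * s ^ (α - (j:ℝ)) * r ^ j) * ψ r := by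
          rw [Finset.sum_mul]
          exact Finset.sum_congr rfl fun j _ => by ring
        rw [hsm, hE]
        ring
      rw [setIntegral_congr_fun measurableSet_Ioo hptwise,
        integral_add (integrable_finset_sum _ hj_int) hψE_int,
        integral_finset_sum _ hj_int]
      congr 1
      exact Finset.sum_congr rfl fun j _ => by
        rw [← integral_const_mul]
    have htail : ∀ j : ℕ, j ≤ n →
        |∫ r in Set.Ioo 0 s, r ^ j * ψ r| ≤ s ^ ((j:ℝ) - β) * M₂ := by
      intro j hj
      have hjint := hmono_int j hj
      have hIci : Set.Ici s ⊆ Set.Ioi (0:ℝ) := fun r hr => lt_of_lt_of_le hs0 hr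
      have hdisj : Disjoint (Set.Ioo (0:ℝ) s) (Set.Ici s) := by
        apply Set.disjoint_left.mpr
        intro r hr hrs
        exact absurd hr.2 (not_lt.mpr hrs)
      have h0 : (∫ r in Set.Ioo 0 s, r ^ j * ψ r) + ∫ r in Set.Ici s, r ^ j * ψ r = 0 := by
        rw [← setIntegral_union hdisj measurableSet_Ici (hjint.mono_set hsub)
          (hjint.mono_set hIci), Set.Ioo_union_Ici_eq_Ioi hs0]
        exact hmom j hj
      have hflip : ∫ r in Set.Ioo 0 s, r ^ j * ψ r = -∫ r in Set.Ici s, r ^ j * ψ r := by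
        linarith
      rw [hflip, abs_neg]
      calc |∫ r in Set.Ici s, r ^ j * ψ r|
          ≤ ∫ r in Set.Ici s, ‖r ^ j * ψ r‖ := by
              rw [← Real.norm_eq_abs]; exact norm_integral_le_integral_norm _
        _ ≤ ∫ r in Set.Ici s, s ^ ((j:ℝ) - β) * (r ^ β * |ψ r|) := by
            apply integral_mono_of_nonneg
            · filter_upwards with r using norm_nonneg _
            · exact (hint2.mono_set hIci).const_mul _
            · filter_upwards [ae_restrict_mem measurableSet_Ici] with r hr
              have hrs : s ≤ r := hr
              have hr0 : 0 < r := lt_of_lt_of_le hs0 hrs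
              rw [Real.norm_eq_abs, abs_mul, abs_pow, abs_of_pos hr0]
              have key : (r:ℝ) ^ j ≤ s ^ ((j:ℝ) - β) * r ^ β := by
                rw [← Real.rpow_natCast r j]
                have hj' : r ^ ((j:ℝ)) = r ^ ((j:ℝ) - β) * r ^ β := by
                  rw [← Real.rpow_add hr0]; ring_nf
                rw [hj']
                apply mul_le_mul_of_nonneg_right _ (Real.rpow_nonneg hr0.le _)
                apply Real.rpow_le_rpow_of_nonpos hs0 hrs
                have hjβ : (j:ℝ) ≤ β := le_trans (le_trans (Nat.cast_le.mpr hj) hnα) hαβ.le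
                linarith
              calc r ^ j * |ψ r| ≤ (s ^ ((j:ℝ) - β) * r ^ β) * |ψ r| :=
                    mul_le_mul_of_nonneg_right key (abs_nonneg _)
                _ = s ^ ((j:ℝ) - β) * (r ^ β * |ψ r|) := by ring
        _ = s ^ ((j:ℝ) - β) * ∫ r in Set.Ici s, r ^ β * |ψ r| := integral_const_mul _ _
        _ ≤ s ^ ((j:ℝ) - β) * M₂ := by
            apply mul_le_mul_of_nonneg_left _ (Real.rpow_nonneg hs0.le _)
            apply setIntegral_mono_set hint2
            · filter_upwards [ae_restrict_mem measurableSet_Ioi] with r hr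
              exact mul_nonneg (Real.rpow_nonneg (le_of_lt hr) _) (abs_nonneg _)
            · exact HasSubset.Subset.eventuallyLE hIci
    -- assemble
    rw [hRL, abs_mul, abs_of_pos (by positivity : (0:ℝ) < 1/Real.Gamma (1+α)), mul_assoc]
    apply mul_le_mul_of_nonneg_left _ (by positivity : (0:ℝ) ≤ 1/Real.Gamma (1+α))
    rw [hsplit]
    have hterm : ∀ j ∈ Finset.range (n+1),
        |c j * s ^ (α - (j:ℝ)) * ∫ r in Set.Ioo 0 s, r ^ j * ψ r|
          ≤ |c j| * M₂ * s ^ (α - m) := by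
      intro j hj
      have hjn : j ≤ n := Nat.lt_succ_iff.mp (Finset.mem_range.mp hj)
      rw [abs_mul, abs_mul, abs_of_nonneg (Real.rpow_nonneg hs0.le _)]
      have hexp : s ^ (α - (j:ℝ)) * s ^ ((j:ℝ) - β) = s ^ (α - β) := by
        rw [← Real.rpow_add hs0]
        ring_nf
      calc |c j| * s ^ (α - (j:ℝ)) * |∫ r in Set.Ioo 0 s, r ^ j * ψ r|
          ≤ |c j| * s ^ (α - (j:ℝ)) * (s ^ ((j:ℝ) - β) * M₂) := by
            apply mul_le_mul_of_nonneg_left (htail j hjn)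
            exact mul_nonneg (abs_nonneg _) (Real.rpow_nonneg hs0.le _)
        _ = |c j| * M₂ * (s ^ (α - (j:ℝ)) * s ^ ((j:ℝ) - β)) := by ring
        _ = |c j| * M₂ * s ^ (α - β) := by rw [hexp]
        _ ≤ |c j| * M₂ * s ^ (α - m) := by
            apply mul_le_mul_of_nonneg_left
              (Real.rpow_le_rpow_of_exponent_le hs1 (by linarith))
              (mul_nonneg (abs_nonneg _) hM₂0)
    have hrem : |∫ r in Set.Ioo 0 s, ψ r * E r| ≤ Ct * (M₁ + M₂) * s ^ (α - m) := by
      calc |∫ r in Set.Ioo 0 s, ψ r * E r|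
          ≤ ∫ r in Set.Ioo 0 s, ‖ψ r * E r‖ := by
              rw [← Real.norm_eq_abs]; exact norm_integral_le_integral_norm _
        _ ≤ ∫ r in Set.Ioo 0 s, Ct * s ^ (α - m) * (|ψ r| + r ^ β * |ψ r|) := by
            apply integral_mono_of_nonneg
            · filter_upwards with r using norm_nonneg _
            · exact (hsum.mono_set hsub).const_mul _
            · filter_upwards [ae_restrict_mem measurableSet_Ioo] with r hr
              rw [Real.norm_eq_abs]
              exact hψE_bd r hr
        _ = Ct * s ^ (α - m) * ∫ r in Set.Ioo 0 s, (|ψ r| + r ^ β * |ψ r|) :=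
            integral_const_mul _ _
        _ ≤ Ct * s ^ (α - m) * (M₁ + M₂) := by
            apply mul_le_mul_of_nonneg_left _
              (mul_nonneg hCt0 (Real.rpow_nonneg hs0.le _))
            have h1 : ∫ r in Set.Ioo 0 s, (|ψ r| + r ^ β * |ψ r|)
                ≤ ∫ r in Set.Ioi 0, (|ψ r| + r ^ β * |ψ r|) := by
              apply setIntegral_mono_set hsum
              · filter_upwards [ae_restrict_mem measurableSet_Ioi] with r hr
                exact add_nonneg (abs_nonneg _)
                  (mul_nonneg (Real.rpow_nonneg (le_of_lt hr) _) (abs_nonneg _))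
              · exact HasSubset.Subset.eventuallyLE hsub
            have h2 : ∫ r in Set.Ioi (0:ℝ), (|ψ r| + r ^ β * |ψ r|) = M₁ + M₂ :=
              integral_add hint hint2
            linarith
        _ = Ct * (M₁ + M₂) * s ^ (α - m) := by ring
    calc |(∑ j ∈ Finset.range (n+1), c j * s ^ (α - (j:ℝ)) * ∫ r in Set.Ioo 0 s, r ^ j * ψ r)
            + ∫ r in Set.Ioo 0 s, ψ r * E r|
        ≤ |∑ j ∈ Finset.range (n+1), c j * s ^ (α - (j:ℝ)) * ∫ r in Set.Ioo 0 s, r ^ j * ψ r|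
            + |∫ r in Set.Ioo 0 s, ψ r * E r| := abs_add_le _ _
      _ ≤ (∑ j ∈ Finset.range (n+1), |c j| * M₂ * s ^ (α - m)) + Ct * (M₁ + M₂) * s ^ (α - m) := by
          apply add_le_add _ hrem
          exact le_trans (Finset.abs_sum_le_sum_abs _ _) (Finset.sum_le_sum hterm)
      _ = ((∑ j ∈ Finset.range (n+1), |c j|) * M₂ + Ct * (M₁ + M₂)) * s ^ (α - m) := by
          rw [← Finset.sum_mul, ← Finset.sum_mul]
          ring
  -- conclude
  set D₁ := (1/Real.Gamma (1+α)) * M₁ with hD₁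
  set D₂ := (1/Real.Gamma (1+α)) * ((∑ j ∈ Finset.range (n+1), |c j|) * M₂ + Ct * (M₁ + M₂))
    with hD₂
  have hD₁0 : 0 ≤ D₁ := mul_nonneg (by positivity) hM₁0
  have hD₂0 : 0 ≤ D₂ := by
    apply mul_nonneg (by positivity)
    apply add_nonneg
    · exact mul_nonneg (Finset.sum_nonneg fun j _ => abs_nonneg _) hM₂0
    · exact mul_nonneg hCt0 (add_nonneg hM₁0 hM₂0)
  refine ⟨D₁ + D₂ + 1, by linarith, ?_, ?_⟩
  · intro s hs0 hs1
    calc |riemannLiouville (1+α) ψ s| ≤ D₁ * s ^ α := hsmall s hs0 hs1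
      _ ≤ (D₁ + D₂ + 1) * s ^ α :=
        mul_le_mul_of_nonneg_right (by linarith) (Real.rpow_nonneg hs0.le _)
  · intro s hs1
    have hs0 : (0:ℝ) < s := lt_of_lt_of_le one_pos hs1
    calc |riemannLiouville (1+α) ψ s| ≤ D₂ * s ^ (α - m) := hbig s hs1
      _ ≤ (D₁ + D₂ + 1) * s ^ (α - m) :=
        mul_le_mul_of_nonneg_right (by linarith) (Real.rpow_nonneg hs0.le _)
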